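/- Let μ ≥ 1 be rational. Then the limit κ̂(μ) = lim_{L→∞} (1/(μL)) log N̂_L(μ), taken along positive integers L for which μL and (μ−1)L/2 are integers, exists and is finite. -/

import Mathlib

open Filter

/-- The three allowed steps of a directed path: right, up, down. -/
def dstep : Fin 3 → ℤ × ℤ := ![(1, 0), (0, 1), (0, -1)]

/-- Position of the path after `k` steps, starting at the origin. -/
def pathPos (s : List (Fin 3)) (k : ℕ) : ℤ × ℤ := ((s.take k).map dstep).sum

/-- A path is self-avoiding if the sites it visits (including the start) are
pairwise distinct. -/
def SelfAvoiding (s : List (Fin 3)) : Prop :=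
  ∀ j k : ℕ, j ≤ s.length → k ≤ s.length → pathPos s j = pathPos s k → j = k

/-- Number of `n`-step directed self-avoiding paths from the origin to `e`. -/
noncomputable def numPaths (n : ℕ) (e : ℤ × ℤ) : ℕ :=
  Set.ncard {s : List (Fin 3) | s.length = n ∧ SelfAvoiding s ∧ pathPos s n = e}

/-- Extract the natural number represented by a nonnegative integer-valued rational. -/
def qnat (q : ℚ) : ℕ := q.num.toNat

/-- The positive integers `L` along which the limit is taken: `μL` and
`(μ−1)L/2` are integers. -/
def goodLmu (μ : ℚ) (L : ℕ) : Prop :=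
  0 < L ∧ (∃ m : ℕ, μ * (L : ℚ) = (m : ℚ)) ∧ (∃ m : ℕ, (μ - 1) * (L : ℚ) / 2 = (m : ℚ))

lemma pathPos_zero (s : List (Fin 3)) : pathPos s 0 = 0 := rfl

lemma pathPos_append_left (p q : List (Fin 3)) {k : ℕ} (hk : k ≤ p.length) :
    pathPos (p ++ q) k = pathPos p k := by
  unfold pathPos
  rw [List.take_append_of_le_length hk]

lemma pathPos_append_right (p q : List (Fin 3)) (j : ℕ) :
    pathPos (p ++ q) (p.length + j) = pathPos p p.length + pathPos q j := by
  unfold pathPos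
  rw [List.take_append, List.map_append, List.sum_append, List.take_length]
  rw [Nat.add_sub_cancel_left, List.take_of_length_le (Nat.le_add_right _ _)]

lemma pathPos_decompose (s : List (Fin 3)) {j k : ℕ} (h : j ≤ k) :
    pathPos s k = pathPos s j + (((s.drop j).take (k - j)).map dstep).sum := by
  unfold pathPos
  rw [← Nat.add_sub_cancel' h, List.take_add, List.map_append, List.sum_append]
  simp [Nat.add_sub_cancel_left]

lemma pathPos_succ (s : List (Fin 3)) {k : ℕ} (hk : k < s.length) :
    pathPos s (k + 1) = pathPos s k + dstep (s.get ⟨k, hk⟩) := by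
  unfold pathPos
  rw [List.take_succ, List.map_append, List.sum_append]
  simp [List.getElem?_eq_getElem hk]

lemma dstep_fst_nonneg (i : Fin 3) : 0 ≤ (dstep i).1 := by
  fin_cases i <;> simp [dstep]

lemma sum_fst_nonneg (t : List (Fin 3)) : 0 ≤ ((t.map dstep).sum).1 := by
  induction t with
  | nil => simp
  | cons a t ih =>
      simp only [List.map_cons, List.sum_cons, Prod.fst_add]
      have := dstep_fst_nonneg a
      omega

lemma sum_fst_eq_zero {t : List (Fin 3)} (h : ((t.map dstep).sum).1 = 0) :
    ∀ i ∈ t, i ≠ 0 := by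
  induction t with
  | nil => simp
  | cons a t ih =>
      simp only [List.map_cons, List.sum_cons, Prod.fst_add] at h
      have h1 := dstep_fst_nonneg a
      have h2 := sum_fst_nonneg t
      intro i hi
      rcases List.mem_cons.1 hi with rfl | hi
      · intro h0
        rw [h0] at h
        have ha : (dstep (0 : Fin 3)).1 = 1 := rfl
        omega
      · exact ih (by omega) i hi

lemma mono_x (s : List (Fin 3)) {j k : ℕ} (h : j ≤ k) :
    (pathPos s j).1 ≤ (pathPos s k).1 := by
  rw [pathPos_decompose s h]
  have := sum_fst_nonneg ((s.drop j).take (k - j))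
  simp only [Prod.fst_add]
  omega

lemma nonneg_x (s : List (Fin 3)) (k : ℕ) : 0 ≤ (pathPos s k).1 := by
  have := mono_x s (Nat.zero_le k)
  rwa [pathPos_zero] at this

lemma steps_vertical {s : List (Fin 3)} {j k : ℕ} (hjk : j ≤ k) (hk : k ≤ s.length)
    (h : (pathPos s j).1 = (pathPos s k).1) :
    ∀ i (hi : i < s.length), j ≤ i → i < k → s.get ⟨i, hi⟩ ≠ 0 := by
  have hd := pathPos_decompose s hjk
  rw [hd] at h
  simp only [Prod.fst_add] at h
  have hz : (((s.drop j).take (k - j)).map dstep).sum.1 = 0 := by omega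
  have hall := sum_fst_eq_zero hz
  intro i hi hji hik
  have hlen : i - j < ((s.drop j).take (k - j)).length := by
    simp [List.length_take, List.length_drop]
    omega
  have : ((s.drop j).take (k - j))[i - j] = s[i] := by
    rw [List.getElem_take, List.getElem_drop]
    congr 1
    omega
  have hm : s[i] ∈ (s.drop j).take (k - j) := this ▸ List.getElem_mem hlen
  simpa using hall _ hm

lemma consec_eq {s : List (Fin 3)} (hs : SelfAvoiding s) {i : ℕ} (h2 : i + 2 ≤ s.length)
    (ha : s.get ⟨i, by omega⟩ ≠ 0) (hb : s.get ⟨i + 1, by omega⟩ ≠ 0) :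
    s.get ⟨i + 1, by omega⟩ = s.get ⟨i, by omega⟩ := by
  by_contra hne
  have key : ∀ a b : Fin 3, a ≠ 0 → b ≠ 0 → b ≠ a → dstep a + dstep b = 0 := by decide
  have h1 : pathPos s (i + 1) = pathPos s i + dstep (s.get ⟨i, by omega⟩) :=
    pathPos_succ s (by omega)
  have h2' : pathPos s (i + 2) = pathPos s (i + 1) + dstep (s.get ⟨i + 1, by omega⟩) :=
    pathPos_succ s (by omega)
  have heq : pathPos s (i + 2) = pathPos s i := by
    rw [h2', h1, add_assoc, key _ _ ha hb hne, add_zero]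
  have := hs (i + 2) i (by omega) (by omega) heq
  omega

lemma steps_uniform {s : List (Fin 3)} (hs : SelfAvoiding s) {j k : ℕ}
    (hjk : j < k) (hk : k ≤ s.length)
    (hv : ∀ i (hi : i < s.length), j ≤ i → i < k → s.get ⟨i, hi⟩ ≠ 0) :
    ∀ i (hi : i < s.length), j ≤ i → i < k →
      s.get ⟨i, hi⟩ = s.get ⟨j, by omega⟩ := by
  intro i hi hji hik
  induction i with
  | zero =>
      have : j = 0 := by omega
      subst this; rfl
  | succ m ih =>
      rcases Nat.eq_or_lt_of_le hji with he | hlt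
      · simp_rw [← he]
      · have hm : m < s.length := by omega
        have hmj : j ≤ m := by omega
        have hmk : m < k := by omega
        have := consec_eq hs (i := m) (by omega) (hv m hm hmj hmk) (hv (m+1) hi hji hik)
        rw [this]
        exact ih hm hmj hmk

lemma run_formula {s : List (Fin 3)} {j m k : ℕ} {c : Fin 3}
    (hjm : j ≤ m) (hmk : m ≤ k) (hk : k ≤ s.length)
    (hall : ∀ i (hi : i < s.length), j ≤ i → i < k → s.get ⟨i, hi⟩ = c) :
    pathPos s m = pathPos s j + (m - j) • dstep c := by
  rw [pathPos_decompose s hjm]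
  congr 1
  have hlen : ((s.drop j).take (m - j)).length = m - j := by
    simp [List.length_take, List.length_drop]
    omega
  have hrep : (s.drop j).take (m - j) = List.replicate (m - j) c := by
    rw [List.eq_replicate_iff]
    refine ⟨hlen, ?_⟩
    intro b hb
    obtain ⟨idx, hidx, hbe⟩ := List.getElem_of_mem hb
    have h1 : ((s.drop j).take (m - j))[idx] = s[j + idx]'(by
        rw [hlen] at hidx; omega) := by
      rw [List.getElem_take, List.getElem_drop]
    rw [hlen] at hidx
    rw [← hbe, h1]
    exact hall (j + idx) (by omega) (by omega) (by omega)
  rw [hrep, List.map_replicate, List.sum_replicate]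

lemma dstep_vert {c : Fin 3} (hc : c ≠ 0) :
    (dstep c).1 = 0 ∧ ((dstep c).2 = 1 ∨ (dstep c).2 = -1) := by
  revert hc; revert c; decide

lemma sa_append_ordered {p q : List (Fin 3)} (hp : SelfAvoiding p) (hq : SelfAvoiding q)
    (hcompat : ∀ (h1 : 0 < p.length) (h2 : 0 < q.length),
      p.get ⟨p.length - 1, by omega⟩ ≠ 0 → q.get ⟨0, h2⟩ ≠ 0 →
      q.get ⟨0, h2⟩ = p.get ⟨p.length - 1, by omega⟩) :
    ∀ j k : ℕ, j ≤ k → k ≤ (p ++ q).length → pathPos (p ++ q) j = pathPos (p ++ q) k →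
      j = k := by
  intro j k hjk hk heq
  set n1 := p.length with hn1
  set n2 := q.length with hn2
  rw [List.length_append] at hk
  by_cases hk1 : k ≤ n1
  · rw [pathPos_append_left p q (le_trans hjk hk1), pathPos_append_left p q hk1] at heq
    exact hp j k (le_trans hjk hk1) hk1 heq
  · by_cases hj1 : n1 ≤ j
    · obtain ⟨j', rfl⟩ : ∃ j', j = n1 + j' := ⟨j - n1, by omega⟩
      obtain ⟨k', rfl⟩ : ∃ k', k = n1 + k' := ⟨k - n1, by omega⟩
      rw [pathPos_append_right, pathPos_append_right] at heq
      have := hq j' k' (by omega) (by omega) (add_left_cancel heq)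
      omega
    · -- j < n1 < k
      push_neg at hj1 hk1
      obtain ⟨k', rfl⟩ : ∃ k', k = n1 + k' := ⟨k - n1, by omega⟩
      have hk' : 0 < k' := by omega
      rw [pathPos_append_left p q (le_of_lt hj1), pathPos_append_right] at heq
      -- x coordinates
      have hx1 : (pathPos p j).1 ≤ (pathPos p n1).1 := mono_x p (le_of_lt hj1)
      have hx2 : 0 ≤ (pathPos q k').1 := nonneg_x q k'
      have hfst : (pathPos p j).1 = (pathPos p n1).1 + (pathPos q k').1 := by
        rw [heq]; simp [hn1]
      have hxq : (pathPos q k').1 = 0 := by omega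
      have hxp : (pathPos p j).1 = (pathPos p n1).1 := by omega
      -- p's final run is vertical and uniform, equal to last step
      have hvp := steps_vertical (le_of_lt hj1) (le_refl n1 |>.trans (by simp [hn1])) hxp
      have hc : p.get ⟨n1 - 1, by omega⟩ ≠ 0 := hvp (n1 - 1) (by omega) (by omega) (by omega)
      have hup := steps_uniform hp hj1 (by omega) hvp
      set c := p.get ⟨j, by omega⟩ with hcdef
      have hlast : p.get ⟨n1 - 1, by omega⟩ = c := hup (n1 - 1) (by omega) (by omega) (by omega)
      have hpf : pathPos p n1 = pathPos p j + (n1 - j) • dstep c :=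
        run_formula (le_of_lt hj1) (le_refl n1) (by omega) (fun i hi h1 h2 => hup i hi h1 h2)
      -- q's initial run
      have hvq := steps_vertical (s := q) (Nat.zero_le k') (by omega) (by rw [pathPos_zero]; exact hxq.symm)
      have hc' : q.get ⟨0, by omega⟩ ≠ 0 := hvq 0 (by omega) (by omega) hk'
      have huq := steps_uniform hq hk' (by omega) hvq
      have hqf : pathPos q k' = pathPos q 0 + (k' - 0) • dstep (q.get ⟨0, by omega⟩) :=
        run_formula (Nat.zero_le k') (le_refl k') (by omega)
          (fun i hi h1 h2 => huq i hi h1 h2)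
      have hcc : q.get ⟨0, by omega⟩ = c := by
        rw [← hlast]
        exact hcompat (by omega) (by omega) (hlast ▸ (hcdef ▸ hvp j (by omega) le_rfl hj1)) hc'
      rw [hcc] at hqf
      rw [pathPos_zero, zero_add, Nat.sub_zero] at hqf
      -- y coordinates give a contradiction
      have hcn : c ≠ 0 := hvp j (by omega) le_rfl hj1
      obtain ⟨-, hv2⟩ := dstep_vert hcn
      have hy : (pathPos p j).2 = (pathPos p n1).2 + (pathPos q k').2 := by rw [heq]; simp [hn1]
      rw [hpf] at hy
      rw [hqf] at hy
      simp only [Prod.snd_add, Prod.smul_snd] at hy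
      simp only [nsmul_eq_mul] at hy
      -- (pathPos p j).2 = (pathPos p j).2 + (n1-j) * w + k' * w
      have hn1j : (0:ℤ) < ((n1 - j : ℕ) : ℤ) := by exact_mod_cast Nat.sub_pos_of_lt hj1
      have hk'' : (0:ℤ) < ((k' : ℕ) : ℤ) := by exact_mod_cast hk'
      rcases hv2 with h | h <;> rw [h] at hy <;> omega

lemma sa_append' {p q : List (Fin 3)} (hp : SelfAvoiding p) (hq : SelfAvoiding q)
    (hcompat : ∀ (h1 : 0 < p.length) (h2 : 0 < q.length),
      p.get ⟨p.length - 1, by omega⟩ ≠ 0 → q.get ⟨0, h2⟩ ≠ 0 →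
      q.get ⟨0, h2⟩ = p.get ⟨p.length - 1, by omega⟩) :
    SelfAvoiding (p ++ q) := by
  intro j k hj hk heq
  rcases le_total j k with h | h
  · exact sa_append_ordered hp hq hcompat j k h hk heq
  · exact (sa_append_ordered hp hq hcompat k j h hj heq.symm).symm

def dflip : Fin 3 → Fin 3 := ![0, 2, 1]

lemma dflip_invol : Function.Involutive dflip := by intro x; revert x; decide

lemma dstep_dflip (i : Fin 3) : dstep (dflip i) = ((dstep i).1, -(dstep i).2) := by
  revert i; decide

lemma map_dflip_sum (t : List (Fin 3)) :
    ((t.map dflip).map dstep).sum = (((t.map dstep).sum).1, -((t.map dstep).sum).2) := by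
  induction t with
  | nil => simp; rfl
  | cons a t ih =>
      simp only [List.map_cons, List.sum_cons, ih, dstep_dflip, Prod.fst_add, Prod.snd_add]
      ext <;> simp <;> ring

lemma pathPos_map_dflip (s : List (Fin 3)) (k : ℕ) :
    pathPos (s.map dflip) k = ((pathPos s k).1, -(pathPos s k).2) := by
  unfold pathPos
  rw [← List.map_take, map_dflip_sum]

lemma sa_map_dflip {s : List (Fin 3)} (hs : SelfAvoiding s) :
    SelfAvoiding (s.map dflip) := by
  intro j k hj hk heq
  rw [List.length_map] at hj hk
  rw [pathPos_map_dflip, pathPos_map_dflip] at heq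
  exact hs j k hj hk (by
    obtain ⟨h1, h2⟩ := Prod.mk.injEq .. ▸ heq
    ext
    · exact h1
    · omega)

lemma sa_or_flip {p q : List (Fin 3)} (hp : SelfAvoiding p) (hq : SelfAvoiding q) :
    SelfAvoiding (p ++ q) ∨ SelfAvoiding (p ++ q.map dflip) := by
  rcases Nat.eq_zero_or_pos p.length with h1 | h1
  · left
    refine sa_append' hp hq ?_
    intro h1' _ _ _
    omega
  rcases Nat.eq_zero_or_pos q.length with h2 | h2
  · left
    refine sa_append' hp hq ?_
    intro _ h2' _ _
    omega
  set a := p.get ⟨p.length - 1, by omega⟩ with hadef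
  set b := q.get ⟨0, h2⟩ with hbdef
  by_cases hab : a = 0 ∨ b = 0 ∨ b = a
  · left
    refine sa_append' hp hq ?_
    intro _ h2' ha hb
    rcases hab with h | h | h
    · exact absurd h ha
    · exact absurd h hb
    · exact h
  · right
    push_neg at hab
    obtain ⟨ha, hb, hba⟩ := hab
    refine sa_append' hp (sa_map_dflip hq) ?_
    intro _ h2' _ _
    have hget : (q.map dflip).get ⟨0, h2'⟩ = dflip b := by
      simp [hbdef, List.getElem_map]
    rw [hget]
    have : ∀ a b : Fin 3, a ≠ 0 → b ≠ 0 → b ≠ a → dflip b = a := by decide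
    exact this a b ha hb hba

lemma pathSet_finite (n : ℕ) (e : ℤ × ℤ) :
    {s : List (Fin 3) | s.length = n ∧ SelfAvoiding s ∧ pathPos s n = e}.Finite :=
  (List.finite_length_eq (Fin 3) n).subset (fun _ h => h.1)

lemma concat_mem {p q : List (Fin 3)} {n1 n2 : ℕ} {L1 L2 : ℤ}
    (hp : p.length = n1 ∧ SelfAvoiding p ∧ pathPos p n1 = (L1, 0))
    (hq2 : q.length = n2) (hsa : SelfAvoiding (p ++ q)) (hqe : pathPos q n2 = (L2, 0)) :
    (p ++ q).length = n1 + n2 ∧ SelfAvoiding (p ++ q) ∧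
      pathPos (p ++ q) (n1 + n2) = (L1 + L2, 0) := by
  obtain ⟨hl, hsp, hpe⟩ := hp
  refine ⟨by simp [hl, hq2], hsa, ?_⟩
  have : pathPos (p ++ q) (p.length + n2) = pathPos p p.length + pathPos q n2 :=
    pathPos_append_right p q n2
  rw [hl] at this
  rw [this, hpe, hqe]
  ext <;> simp

lemma numPaths_superadd (n1 n2 : ℕ) (L1 L2 : ℤ) :
    numPaths n1 (L1, 0) * numPaths n2 (L2, 0) ≤ 2 * numPaths (n1 + n2) (L1 + L2, 0) := by
  classical
  set A := {s : List (Fin 3) | s.length = n1 ∧ SelfAvoiding s ∧ pathPos s n1 = (L1, 0)}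
  set B := {s : List (Fin 3) | s.length = n2 ∧ SelfAvoiding s ∧ pathPos s n2 = (L2, 0)}
  set C := {s : List (Fin 3) | s.length = n1 + n2 ∧ SelfAvoiding s ∧
    pathPos s (n1 + n2) = (L1 + L2, 0)}
  have hCfin : C.Finite := pathSet_finite _ _
  haveI : Finite ↥C := hCfin
  -- the injection
  have hmem : ∀ (p : ↥A) (q : ↥B), ¬ SelfAvoiding ((p : List (Fin 3)) ++ (q : List (Fin 3))) →
      ((p : List (Fin 3)) ++ (q : List (Fin 3)).map dflip) ∈ C := by
    rintro ⟨p, hp⟩ ⟨q, hq⟩ hns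
    have hor := sa_or_flip hp.2.1 hq.2.1
    rcases hor with h | h
    · exact absurd h hns
    · refine concat_mem hp (by simp [hq.1]) h ?_
      rw [pathPos_map_dflip, hq.2.2]
      ext <;> simp
  have hmem2 : ∀ (p : ↥A) (q : ↥B), SelfAvoiding ((p : List (Fin 3)) ++ (q : List (Fin 3))) →
      ((p : List (Fin 3)) ++ (q : List (Fin 3))) ∈ C := by
    rintro ⟨p, hp⟩ ⟨q, hq⟩ hsa
    exact concat_mem hp hq.1 hsa (hq.1 ▸ hq.2.2)
  set F : ↥A × ↥B → ↥C × Bool := fun x =>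
    if h : SelfAvoiding ((x.1 : List (Fin 3)) ++ (x.2 : List (Fin 3))) then
      (⟨_, hmem2 x.1 x.2 h⟩, false)
    else (⟨_, hmem x.1 x.2 h⟩, true) with hF
  have hinj : Function.Injective F := by
    rintro ⟨⟨p, hp⟩, ⟨q, hq⟩⟩ ⟨⟨p', hp'⟩, ⟨q', hq'⟩⟩ heq
    have hlen : p.length = p'.length := by rw [hp.1, hp'.1]
    by_cases h : SelfAvoiding (p ++ q) <;> by_cases h' : SelfAvoiding (p' ++ q') <;>
      simp only [hF, h, h', dif_pos, dif_neg, not_false_iff, Prod.mk.injEq,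
        Subtype.mk.injEq] at heq
    · obtain ⟨hpq, -⟩ := heq
      obtain ⟨h1, h2⟩ := List.append_inj hpq hlen
      simp [h1, h2]
    · exact absurd heq.2 (by simp)
    · exact absurd heq.2 (by simp)
    · obtain ⟨hpq, -⟩ := heq
      obtain ⟨h1, h2⟩ := List.append_inj hpq hlen
      have h2' : q = q' := List.map_injective_iff.mpr dflip_invol.injective h2
      simp [h1, h2']
  have hcard := Nat.card_le_card_of_injective F hinj
  rw [Nat.card_prod, Nat.card_prod] at hcard
  have hb : Nat.card Bool = 2 := by simp [Nat.card_eq_fintype_card]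
  rw [hb] at hcard
  simpa [numPaths, ← Nat.card_coe_set_eq, mul_comm] using hcard

lemma numPaths_le (n : ℕ) (e : ℤ × ℤ) : numPaths n e ≤ 3 ^ n := by
  classical
  have h1 : numPaths n e ≤ {s : List (Fin 3) | s.length = n}.ncard :=
    Set.ncard_le_ncard (fun s hs => hs.1) (List.finite_length_eq (Fin 3) n)
  refine h1.trans ?_
  have : Function.Injective
      (fun (s : ↥{s : List (Fin 3) | s.length = n}) (i : Fin n) =>
        (s : List (Fin 3)).get ⟨i, by rw [s.2]; exact i.2⟩) := by
    rintro ⟨s, hs⟩ ⟨t, ht⟩ h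
    simp only [Set.mem_setOf_eq] at hs ht
    ext1
    apply List.ext_get (by rw [hs, ht])
    intro i h1 h2
    have := congrFun h ⟨i, by rw [← hs]; exact h1⟩
    simpa using this
  have hc := Nat.card_le_card_of_injective _ this
  rw [Nat.card_coe_set_eq] at hc
  refine hc.trans ?_
  simp [Nat.card_eq_fintype_card]

lemma staircase_mem (L k : ℕ) (hL : 0 < L) :
    (List.replicate k 1 ++ List.replicate L 0 ++ List.replicate k (2 : Fin 3)).length
        = L + 2 * k ∧
    SelfAvoiding (List.replicate k 1 ++ List.replicate L 0 ++ List.replicate k (2 : Fin 3)) ∧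
    pathPos (List.replicate k 1 ++ List.replicate L 0 ++ List.replicate k (2 : Fin 3))
        (L + 2 * k) = ((L : ℤ), 0) := by
  set w := List.replicate k (1 : Fin 3) ++ List.replicate L 0 ++ List.replicate k (2 : Fin 3)
    with hw
  have hlen : w.length = L + 2 * k := by simp [hw]; ring
  have hpos : ∀ j, pathPos w j =
      (((min (j - k) L : ℕ) : ℤ),
        ((min j k : ℕ) : ℤ) - ((min (j - (k + L)) k : ℕ) : ℤ)) := by
    intro j
    unfold pathPos
    rw [hw, List.take_append, List.take_append,
      List.take_replicate, List.take_replicate, List.take_replicate]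
    simp only [List.map_append, List.sum_append, List.map_replicate, List.sum_replicate,
      List.length_append, List.length_replicate]
    have d1 : dstep 1 = (0, 1) := rfl
    have d0 : dstep 0 = (1, 0) := rfl
    have d2 : dstep 2 = (0, -1) := rfl
    rw [d1, d0, d2]
    ext
    · simp
    · simp
      omega
  have hsa : SelfAvoiding w := by
    intro j k' hj hk' heq
    rw [hpos j, hpos k', Prod.mk.injEq] at heq
    rw [hlen] at hj hk'
    obtain ⟨e1, e2⟩ := heq
    omega
  refine ⟨hlen, hsa, ?_⟩
  rw [hpos (L + 2 * k), Prod.mk.injEq]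
  constructor
  · congr 1
    omega
  · have : min (L + 2 * k) k = k := by omega
    have h2 : min (L + 2 * k - (k + L)) k = k := by omega
    rw [this, h2]
    ring

lemma numPaths_zero : numPaths 0 ((0:ℤ), 0) = 1 := by
  have : {s : List (Fin 3) | s.length = 0 ∧ SelfAvoiding s ∧ pathPos s 0 = ((0:ℤ), 0)}
      = {([] : List (Fin 3))} := by
    ext s
    simp only [Set.mem_setOf_eq, Set.mem_singleton_iff, List.length_eq_zero_iff]
    constructor
    · rintro ⟨h, -, -⟩; exact h
    · rintro rfl
      refine ⟨rfl, ?_, rfl⟩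
      intro j k hj hk _
      simp at hj hk
      omega
  rw [numPaths, this, Set.ncard_singleton]

lemma rat_key (μ : ℚ) : (μ : ℚ) * (μ.den : ℚ) = (μ.num : ℚ) := by
  nth_rewrite 1 [← Rat.num_div_den μ]
  rw [div_mul_cancel₀]
  exact_mod_cast μ.pos.ne'

lemma good_char (μ : ℚ) (hμ : 1 ≤ μ) :
    ∃ D : ℕ, 0 < D ∧ ∀ L : ℕ,
      (0 < L ∧ (∃ m : ℕ, μ * (L : ℚ) = (m : ℚ)) ∧
        (∃ m : ℕ, (μ - 1) * (L : ℚ) / 2 = (m : ℚ)))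
      ↔ 0 < L ∧ D ∣ L := by
  set p := μ.num with hp
  set q := μ.den with hqd
  have hq : 0 < q := μ.pos
  have hkey : (μ : ℚ) * (q : ℚ) = (p : ℚ) := rat_key μ
  have hpq : (q : ℤ) ≤ p := by
    have h1 : (q : ℚ) ≤ (p : ℚ) := by
      calc (q:ℚ) = 1 * q := (one_mul _).symm
      _ ≤ μ * q := by
          apply mul_le_mul_of_nonneg_right hμ
          positivity
      _ = p := hkey
    exact_mod_cast h1
  refine ⟨if 2 ∣ (p - q) then q else 2 * q, by split <;> omega, ?_⟩
  intro L
  constructor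
  · rintro ⟨hL, ⟨m, hm⟩, ⟨m2, hm2⟩⟩
    refine ⟨hL, ?_⟩
    -- μ * L = m gives p * L = m * q
    have h1 : (p : ℚ) * L = (m : ℚ) * q := by
      calc (p:ℚ) * L = μ * q * L := by rw [hkey]
      _ = μ * L * q := by ring
      _ = m * q := by rw [hm]
    have h1' : p * (L:ℤ) = (m:ℤ) * q := by exact_mod_cast h1
    have hqL : q ∣ L := by
      have hd : (q:ℤ) ∣ p * (L:ℤ) := ⟨m, by linarith⟩
      have hd2 : q ∣ p.natAbs * L := by
        have := Int.natAbs_dvd_natAbs.mpr hd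
        simpa [Int.natAbs_mul] using this
      exact (Nat.Coprime.dvd_of_dvd_mul_left (Nat.coprime_comm.mp μ.reduced) hd2)
    obtain ⟨t, rfl⟩ := hqL
    -- second condition
    have h2 : ((p - q : ℤ) : ℚ) * (q * t : ℕ) = 2 * m2 * q := by
      push_cast
      have : (μ - 1) * (q * t : ℕ) = 2 * m2 := by
        rw [eq_comm, ← hm2]
        push_cast
        ring
      calc ((p:ℚ) - q) * ((q:ℚ) * t) = (μ * q - 1 * q) * (q * t) := by rw [hkey]; ring
      _ = ((μ - 1) * (q * t)) * q := by ring
      _ = 2 * m2 * q := by rw [← this]; push_cast; ring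
    have h2' : (p - q) * (t:ℤ) = 2 * m2 := by
      have h2'' : (p - q) * ((q:ℤ) * t) = 2 * m2 * q := by exact_mod_cast h2
      have hq0 : (q:ℤ) ≠ 0 := by exact_mod_cast hq.ne'
      apply mul_right_cancel₀ hq0
      linarith [h2'']
    split
    · exact Dvd.intro t rfl
    · rename_i hodd
      have h2t : (2:ℤ) ∣ (p - q) * t := ⟨m2, by linarith⟩
      have := (Int.Prime.dvd_mul' Nat.prime_two h2t).resolve_left hodd
      have ht2 : 2 ∣ t := by exact_mod_cast this
      obtain ⟨t', rfl⟩ := ht2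
      exact ⟨t', by ring⟩
  · rintro ⟨hL, hdvd⟩
    refine ⟨hL, ?_⟩
    split at hdvd
    · rename_i heven
      obtain ⟨t, rfl⟩ := hdvd
      obtain ⟨r, hr⟩ := heven
      have hr0 : 0 ≤ r := by omega
      constructor
      · refine ⟨p.toNat * t, ?_⟩
        have : ((p.toNat : ℕ) : ℚ) = ((p : ℤ) : ℚ) := by
          exact_mod_cast congrArg (fun z : ℤ => (z : ℚ)) (Int.toNat_of_nonneg (show (0:ℤ) ≤ p by omega))
        push_cast
        rw [this, ← hkey]
        ring
      · refine ⟨r.toNat * t, ?_⟩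
        have : ((r.toNat : ℕ) : ℚ) = ((r : ℤ) : ℚ) := by
          exact_mod_cast congrArg (fun z : ℤ => (z : ℚ)) (Int.toNat_of_nonneg hr0)
        push_cast
        rw [this]
        have hpq' : ((p:ℚ) - q) = 2 * r := by exact_mod_cast hr
        calc (μ - 1) * (q * t : ℚ) / 2 = ((μ * q - q) * t) / 2 := by ring
        _ = (((p:ℚ) - q) * t) / 2 := by rw [hkey]
        _ = (2 * r * t) / 2 := by rw [hpq']
        _ = r * t := by ring
    · obtain ⟨t, rfl⟩ := hdvd
      constructor
      · refine ⟨p.toNat * (2 * t), ?_⟩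
        have : ((p.toNat : ℕ) : ℚ) = ((p : ℤ) : ℚ) := by
          exact_mod_cast congrArg (fun z : ℤ => (z : ℚ)) (Int.toNat_of_nonneg (show (0:ℤ) ≤ p by omega))
        push_cast
        rw [this, ← hkey]
        ring
      · refine ⟨(p - q).toNat * t, ?_⟩
        have : (((p - q).toNat : ℕ) : ℚ) = ((p:ℚ) - q) := by
          exact_mod_cast congrArg (fun z : ℤ => (z : ℚ)) (Int.toNat_of_nonneg (show (0:ℤ) ≤ p - q by omega))
        push_cast
        rw [this]
        calc (μ - 1) * ((2:ℚ) * q * t) / 2 = ((μ * q - q) * t) := by ring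
        _ = ((p:ℚ) - q) * t := by rw [hkey]

/-- The limit `κ̂(μ) = lim (1/(μL)) log N̂_L(μ)` exists and is finite, where
`N̂_L(μ)` counts the `μL`-step directed self-avoiding paths from `(0,0)` to `(L,0)`. -/
theorem stmt6 (μ : ℚ) (hμ : 1 ≤ μ) :
    ∃ c : ℝ,
      Tendsto (fun L : ℕ =>
          (1 / ((μ : ℝ) * (L : ℝ))) * Real.log (numPaths (qnat (μ * L)) ((L : ℤ), 0)))
        (atTop ⊓ 𝓟 {L : ℕ | goodLmu μ L}) (nhds c) := by
  classical
  obtain ⟨D, hD, hgood'⟩ := good_char μ hμ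
  have hgood : ∀ L : ℕ, goodLmu μ L ↔ 0 < L ∧ D ∣ L := hgood'
  have hμ0 : (0:ℚ) < μ := lt_of_lt_of_le one_pos hμ
  set P : ℕ := μ.num.toNat with hP
  have hPval : ((P : ℕ) : ℚ) = (μ.num : ℚ) := by
    exact_mod_cast congrArg (fun z : ℤ => (z:ℚ))
      (Int.toNat_of_nonneg (le_of_lt (Rat.num_pos.mpr hμ0)))
  have hμP : μ ≤ (P : ℚ) := by
    rw [hPval]
    calc μ = μ * 1 := (mul_one μ).symm
    _ ≤ μ * (μ.den : ℚ) := by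
        apply mul_le_mul_of_nonneg_left _ (le_of_lt hμ0)
        exact_mod_cast μ.pos
    _ = (μ.num : ℚ) := rat_key μ
  set a : ℕ → ℝ := fun L => Real.log (numPaths (qnat (μ * L)) ((L : ℤ), 0)) with ha
  have hqnat : ∀ (L m : ℕ), μ * L = (m : ℚ) → qnat (μ * L) = m := by
    intro L m h
    rw [h]
    simp [qnat]
  -- basic facts about good L
  have hfacts : ∀ L : ℕ, 0 < L → D ∣ L →
      (1 ≤ numPaths (qnat (μ * L)) ((L : ℤ), 0)) ∧ qnat (μ * L) ≤ P * L := by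
    intro L hL hDL
    obtain ⟨-, ⟨m, hm⟩, ⟨k, hk⟩⟩ := (hgood L).mpr ⟨hL, hDL⟩
    have hmk : m = L + 2 * k := by
      have : (m : ℚ) = (L : ℚ) + 2 * k := by rw [← hm, ← hk]; ring
      exact_mod_cast this
    constructor
    · rw [hqnat L m hm, hmk]
      have hmem := staircase_mem L k hL
      have hfin := pathSet_finite (L + 2 * k) ((L:ℤ), 0)
      exact (Set.ncard_pos hfin).mpr ⟨_, hmem⟩
    · rw [hqnat L m hm]
      have : (m : ℚ) ≤ ((P * L : ℕ) : ℚ) := by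
        rw [← hm]
        push_cast
        exact mul_le_mul_of_nonneg_right hμP (Nat.cast_nonneg L)
      exact_mod_cast this
  -- superadditivity of counts
  have hsuperN : ∀ L1 L2 : ℕ, 0 < L1 → D ∣ L1 → 0 < L2 → D ∣ L2 →
      numPaths (qnat (μ * L1)) ((L1 : ℤ), 0) * numPaths (qnat (μ * L2)) ((L2 : ℤ), 0) ≤
        2 * numPaths (qnat (μ * (L1 + L2 : ℕ))) (((L1 + L2 : ℕ) : ℤ), 0) := by
    intro L1 L2 h1 hd1 h2 hd2
    obtain ⟨-, ⟨m1, hm1⟩, -⟩ := (hgood L1).mpr ⟨h1, hd1⟩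
    obtain ⟨-, ⟨m2, hm2⟩, -⟩ := (hgood L2).mpr ⟨h2, hd2⟩
    have hsum : μ * ((L1 + L2 : ℕ) : ℚ) = ((m1 + m2 : ℕ) : ℚ) := by
      have h' : μ * ((L1:ℚ) + L2) = (m1:ℚ) + m2 := by rw [mul_add, hm1, hm2]
      push_cast
      exact h'
    rw [hqnat L1 m1 hm1, hqnat L2 m2 hm2, hqnat (L1 + L2) (m1 + m2) hsum]
    have hcast : (((L1 + L2 : ℕ)) : ℤ) = (L1 : ℤ) + (L2 : ℤ) := by push_cast; ring
    rw [hcast]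
    exact numPaths_superadd m1 m2 L1 L2
  -- log 3 bound
  have hlog3 : (0:ℝ) ≤ Real.log 3 := Real.log_nonneg (by norm_num)
  have hlog2 : (0:ℝ) ≤ Real.log 2 := Real.log_nonneg (by norm_num)
  have ha_le : ∀ L : ℕ, 0 < L → D ∣ L → a L ≤ (P : ℝ) * L * Real.log 3 := by
    intro L hL hDL
    obtain ⟨hN1, hNle⟩ := hfacts L hL hDL
    have hle : numPaths (qnat (μ * L)) ((L : ℤ), 0) ≤ 3 ^ (P * L) :=
      le_trans (numPaths_le _ _) (Nat.pow_le_pow_right (by norm_num) hNle)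
    have h3 : ((3:ℕ) ^ (P * L) : ℝ) = (3:ℝ) ^ (P * L) := by push_cast; ring
    calc a L ≤ Real.log ((3:ℝ) ^ (P * L)) := by
          apply (Real.log_le_log_iff (by exact_mod_cast hN1) (by positivity)).mpr
          exact_mod_cast hle
    _ = (P * L : ℕ) * Real.log 3 := by rw [Real.log_pow]
    _ = (P : ℝ) * L * Real.log 3 := by push_cast; ring
  have ha0 : a 0 = 0 := by
    have h0 : μ * ((0:ℕ):ℚ) = ((0:ℕ):ℚ) := by push_cast; ring
    rw [ha]
    simp only
    rw [hqnat 0 0 h0]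
    rw [show ((0:ℕ):ℤ) = (0:ℤ) by norm_num, numPaths_zero]
    simp
  -- the subadditive sequence
  have key : ∀ {x y z : ℕ}, 1 ≤ x → 1 ≤ y → x * y ≤ 2 * z →
      Real.log x + Real.log y ≤ Real.log 2 + Real.log z := by
    intro x y z hx hy hxyz
    have hz : 1 ≤ z := by nlinarith
    have hx' : (0:ℝ) < x := by exact_mod_cast hx
    have hy' : (0:ℝ) < y := by exact_mod_cast hy
    have hz' : (0:ℝ) < z := by exact_mod_cast hz
    rw [← Real.log_mul hx'.ne' hy'.ne', ← Real.log_mul (by norm_num) hz'.ne']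
    apply (Real.log_le_log_iff (by positivity) (by positivity)).mpr
    exact_mod_cast hxyz
  set u : ℕ → ℝ := fun t => Real.log 2 - a (D * t) with hu
  have hsub : Subadditive u := by
    intro t1 t2
    rcases Nat.eq_zero_or_pos t1 with rfl | h1
    · simp only [hu, Nat.zero_add, Nat.mul_zero, ha0]
      simp [ha0]
      linarith
    rcases Nat.eq_zero_or_pos t2 with rfl | h2
    · simp only [hu, Nat.add_zero, Nat.mul_zero, ha0]
      simp [ha0]
      linarith
    have hL1 : 0 < D * t1 := Nat.mul_pos hD h1
    have hL2 : 0 < D * t2 := Nat.mul_pos hD h2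
    have hN1 := (hfacts (D * t1) hL1 ⟨t1, rfl⟩).1
    have hN2 := (hfacts (D * t2) hL2 ⟨t2, rfl⟩).1
    have hsup := hsuperN (D * t1) (D * t2) hL1 ⟨t1, rfl⟩ hL2 ⟨t2, rfl⟩
    have hlogs : a (D * t1) + a (D * t2) ≤ Real.log 2 + a (D * (t1 + t2)) := by
      have e3 : D * (t1 + t2) = D * t1 + D * t2 := Nat.mul_add D t1 t2
      simp only [ha, e3]
      exact key hN1 hN2 hsup
    simp only [hu]
    linarith
  -- boundedness from below
  have hDR : (0:ℝ) < (D:ℝ) := by exact_mod_cast hD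
  have hbdd : BddBelow (Set.range fun t : ℕ => u t / t) := by
    refine ⟨-((P:ℝ) * D * Real.log 3), ?_⟩
    rintro x ⟨t, rfl⟩
    rcases Nat.eq_zero_or_pos t with rfl | ht
    · simp only [Nat.cast_zero, div_zero]
      have hnn : (0:ℝ) ≤ (P:ℝ) * D * Real.log 3 := by positivity
      linarith
    have htR : (0:ℝ) < (t:ℝ) := by exact_mod_cast ht
    have hL : 0 < D * t := Nat.mul_pos hD ht
    have hale := ha_le (D * t) hL ⟨t, rfl⟩
    rw [le_div_iff₀ htR]
    have hc : ((D * t : ℕ) : ℝ) = (D:ℝ) * t := by push_cast; ring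
    simp only [hu]
    rw [hc] at hale
    nlinarith
  have hlim := hsub.tendsto_lim hbdd
  -- the limit value
  have hμR : (0:ℝ) < ((μ:ℚ):ℝ) := by exact_mod_cast hμ0
  set c : ℝ := 0 - hsub.lim * (1 / (((μ:ℚ):ℝ) * D)) with hc
  refine ⟨c, ?_⟩
  set g : ℕ → ℝ := fun t =>
    Real.log 2 / (((μ:ℚ):ℝ) * D * t) - (u t / t) * (1 / (((μ:ℚ):ℝ) * D)) with hg
  have hgt : Tendsto g atTop (nhds c) := by
    rw [hc]
    apply Tendsto.sub
    · apply Tendsto.div_atTop (tendsto_const_nhds)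
      have : Tendsto (fun t : ℕ => (t:ℝ)) atTop atTop := tendsto_natCast_atTop_atTop
      have h2 := Tendsto.const_mul_atTop (r := ((μ:ℚ):ℝ) * D) (by positivity) this
      simpa [mul_assoc] using h2
    · exact hlim.mul_const _
  -- transfer along the filter
  have hdivT : Tendsto (fun L : ℕ => L / D) (atTop ⊓ 𝓟 {L : ℕ | goodLmu μ L}) atTop := by
    apply Filter.tendsto_atTop.2
    intro b
    have hev : ∀ᶠ L : ℕ in atTop, b ≤ L / D := by
      filter_upwards [Filter.eventually_ge_atTop (b * D)] with L hL
      exact (Nat.le_div_iff_mul_le hD).mpr hL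
    exact hev.filter_mono inf_le_left
  have hcomp : Tendsto (fun L : ℕ => g (L / D)) (atTop ⊓ 𝓟 {L : ℕ | goodLmu μ L})
      (nhds c) := hgt.comp hdivT
  apply hcomp.congr'
  rw [Filter.eventuallyEq_iff_exists_mem]
  refine ⟨{L : ℕ | goodLmu μ L}, ?_, ?_⟩
  · exact Filter.mem_inf_of_right (Filter.mem_principal_self _)
  · intro L hLS
    obtain ⟨hL, hDL⟩ := (hgood L).mp hLS
    obtain ⟨t, rfl⟩ := hDL
    have ht : 0 < t := by
      rcases Nat.eq_zero_or_pos t with rfl | h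
      · simp at hL
      · exact h
    have htdiv : D * t / D = t := Nat.mul_div_cancel_left t hD
    have htR : (0:ℝ) < (t:ℝ) := by exact_mod_cast ht
    simp only [hg, htdiv, hu, ha]
    push_cast
    field_simp
    ring
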